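/- Under separability of X w.r.t. C*, hierarchical agglomerative clustering with single linkage never merges two clusters from different ground-truth clusters while some mergeable pair of subsets from the same ground-truth cluster remains; consequently, at the stage when exactly K subsets remain (K the number of ground-truth clusters), those subsets are exactly the ground-truth clusters. -/

import Mathlib

open scoped Classical

inductive CTree (α : Type*) where
  | leaf (x : α) : CTree α
  | node (l r : CTree α) : CTree α

namespace CTree

variable {α : Type*}

/-- The set of data points (descendant leaves) of a node. -/
noncomputable def lvs : CTree α → Finset α
  | leaf x => {x}
  | node l r => lvs l ∪ lvs r

theorem lvs_nonempty (t : CTree α) : t.lvs.Nonempty := by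
  induction t with
  | leaf x => exact ⟨x, by simp [lvs]⟩
  | node l r ihl ihr => exact ihl.mono (by simp [lvs])

/-- `Sub s t` : `s` is a subtree (node) of `t`. -/
inductive Sub : CTree α → CTree α → Prop
  | refl (t : CTree α) : Sub t t
  | left {s l r : CTree α} : Sub s l → Sub s (node l r)
  | right {s l r : CTree α} : Sub s r → Sub s (node l r)

/-- Least common ancestor (as a subtree) of two data points. -/
noncomputable def lca : CTree α → α → α → CTree α
  | leaf a, _, _ => leaf a
  | node l r, x, y =>
      if x ∈ lvs l ∧ y ∈ lvs l then lca l x y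
      else if x ∈ lvs r ∧ y ∈ lvs r then lca r x y
      else node l r

/-- Dendrogram purity 1: for every same-cluster pair, all leaves below their
least common ancestor belong to that cluster. -/
def PurityOne (C : α → ℕ) (t : CTree α) : Prop :=
  ∀ x ∈ t.lvs, ∀ y ∈ t.lvs, x ≠ y → C x = C y → ∀ z ∈ (t.lca x y).lvs, C z = C x

/-- A dataset `X` is separable w.r.t. a ground-truth clustering `C`:
every within-cluster distance is strictly smaller than every between-cluster distance. -/
def Separable [MetricSpace α] (X : Finset α) (C : α → ℕ) : Prop :=
  ∀ x ∈ X, ∀ y ∈ X, ∀ x' ∈ X, ∀ y' ∈ X,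
    x ≠ y → C x = C y → C x' ≠ C y' → dist x y < dist x' y'

/-- A node `v` with sibling `v'` and aunt `a` is masked if some `x ∈ lvs v` is farther
from some point of `v'` than from some point of `a`
(i.e. `max_{y ∈ lvs v'} ‖x-y‖ > min_{z ∈ lvs a} ‖x-z‖`). -/
def Masked [MetricSpace α] (v v' a : CTree α) : Prop :=
  ∃ x ∈ v.lvs,
    (a.lvs.inf' (lvs_nonempty a) fun z => dist x z) <
      (v'.lvs.sup' (lvs_nonempty v') fun y => dist x y)

end CTree

abbrev Euc (d : ℕ) := EuclideanSpace ℝ (Fin d)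

/-- One merge step of hierarchical agglomerative clustering with linkage `link`:
two distinct current subsets minimizing the linkage over all current pairs are merged. -/
inductive HACStep {α : Type*} (link : Finset α → Finset α → ℝ) :
    Finset (Finset α) → Finset (Finset α) → Prop
  | merge (P : Finset (Finset α)) (A B : Finset α)
      (hA : A ∈ P) (hB : B ∈ P) (hne : A ≠ B)
      (hmin : ∀ A' ∈ P, ∀ B' ∈ P, A' ≠ B' → link A B ≤ link A' B') :
      HACStep link P (insert (A ∪ B) ((P.erase A).erase B))

/-- Single linkage: minimum pairwise distance between the two subsets. -/
noncomputable def singleLink {α : Type*} [MetricSpace α] (A B : Finset α) : ℝ :=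
  sInf (Set.image2 dist (↑A : Set α) (↑B : Set α))

/-- Complete linkage: maximum pairwise distance between the two subsets. -/
noncomputable def completeLink {α : Type*} [MetricSpace α] (A B : Finset α) : ℝ :=
  sSup (Set.image2 dist (↑A : Set α) (↑B : Set α))

/-- Average linkage: average pairwise distance between the two subsets. -/
noncomputable def averageLink {α : Type*} [MetricSpace α] (A B : Finset α) : ℝ :=
  (∑ a ∈ A, ∑ b ∈ B, dist a b) / ((A.card : ℝ) * (B.card : ℝ))

/-! ### Auxiliary material for the proof -/

lemma singleLink_mem' {α : Type*} [MetricSpace α] {A B : Finset α}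
    (hA : A.Nonempty) (hB : B.Nonempty) :
    ∃ a ∈ A, ∃ b ∈ B, singleLink A B = dist a b := by
  have hfin : (Set.image2 dist (↑A : Set α) (↑B : Set α)).Finite :=
    A.finite_toSet.image2 _ B.finite_toSet
  have hne : (Set.image2 dist (↑A : Set α) (↑B : Set α)).Nonempty :=
    ⟨dist hA.choose hB.choose, Set.mem_image2_of_mem hA.choose_spec hB.choose_spec⟩
  obtain ⟨a, ha, b, hb, hab⟩ := hne.csInf_mem hfin
  exact ⟨a, ha, b, hb, hab.symm⟩

lemma singleLink_le' {α : Type*} [MetricSpace α] {A B : Finset α}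
    {a b : α} (ha : a ∈ A) (hb : b ∈ B) : singleLink A B ≤ dist a b := by
  have hfin : (Set.image2 dist (↑A : Set α) (↑B : Set α)).Finite :=
    A.finite_toSet.image2 _ B.finite_toSet
  exact csInf_le hfin.bddBelow (Set.mem_image2_of_mem ha hb)

/-- `P` is a partition of `X` into nonempty pairwise disjoint subsets. -/
def IsPartn {α : Type*} (X : Finset α) (P : Finset (Finset α)) : Prop :=
  (∀ A ∈ P, A.Nonempty ∧ A ⊆ X) ∧ (∀ x ∈ X, ∃ A ∈ P, x ∈ A) ∧
  (∀ A ∈ P, ∀ B ∈ P, A ≠ B → Disjoint A B)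

lemma partn_step {α : Type*} {X : Finset α} {P : Finset (Finset α)}
    {A B : Finset α} (hP : IsPartn X P) (hA : A ∈ P) (hB : B ∈ P) (hne : A ≠ B) :
    IsPartn X (insert (A ∪ B) ((P.erase A).erase B)) ∧
    (insert (A ∪ B) ((P.erase A).erase B)).card + 1 = P.card := by
  obtain ⟨h1, h2, h3⟩ := hP
  have hAB_not : A ∪ B ∉ (P.erase A).erase B := by
    intro h
    have hmem : A ∪ B ∈ P := Finset.mem_of_mem_erase (Finset.mem_of_mem_erase h)
    have hneA : A ∪ B ≠ A := Finset.ne_of_mem_erase (Finset.mem_of_mem_erase h)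
    have hdisj : Disjoint (A ∪ B) A := h3 _ hmem _ hA hneA
    have : Disjoint A A := hdisj.mono_left Finset.subset_union_left
    exact (h1 A hA).1.ne_empty ((Finset.disjoint_self_iff_empty A).mp this)
  refine ⟨⟨?_, ?_, ?_⟩, ?_⟩
  · intro S hS
    rcases Finset.mem_insert.mp hS with rfl | hS
    · exact ⟨(h1 A hA).1.mono Finset.subset_union_left,
        Finset.union_subset (h1 A hA).2 (h1 B hB).2⟩
    · exact h1 _ (Finset.mem_of_mem_erase (Finset.mem_of_mem_erase hS))
  · intro x hx
    obtain ⟨S, hS, hxS⟩ := h2 x hx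
    by_cases hSA : S = A
    · exact ⟨A ∪ B, Finset.mem_insert_self _ _, Finset.mem_union_left _ (hSA ▸ hxS)⟩
    by_cases hSB : S = B
    · exact ⟨A ∪ B, Finset.mem_insert_self _ _, Finset.mem_union_right _ (hSB ▸ hxS)⟩
    · exact ⟨S, Finset.mem_insert_of_mem (Finset.mem_erase.mpr ⟨hSB,
        Finset.mem_erase.mpr ⟨hSA, hS⟩⟩), hxS⟩
  · intro S hS T hT hST
    have key : ∀ U ∈ (P.erase A).erase B, Disjoint (A ∪ B) U := by
      intro U hU
      have hUP : U ∈ P := Finset.mem_of_mem_erase (Finset.mem_of_mem_erase hU)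
      have hUA : U ≠ A := Finset.ne_of_mem_erase (Finset.mem_of_mem_erase hU)
      have hUB : U ≠ B := Finset.ne_of_mem_erase hU
      exact Finset.disjoint_union_left.mpr
        ⟨h3 _ hA _ hUP (Ne.symm hUA), h3 _ hB _ hUP (Ne.symm hUB)⟩
    rcases Finset.mem_insert.mp hS with rfl | hS
    · rcases Finset.mem_insert.mp hT with rfl | hT
      · exact absurd rfl hST
      · exact key _ hT
    · rcases Finset.mem_insert.mp hT with rfl | hT
      · exact (key _ hS).symm
      · exact h3 _ (Finset.mem_of_mem_erase (Finset.mem_of_mem_erase hS)) _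
          (Finset.mem_of_mem_erase (Finset.mem_of_mem_erase hT)) hST
  · rw [Finset.card_insert_of_notMem hAB_not,
      Finset.card_erase_of_mem (Finset.mem_erase.mpr ⟨Ne.symm hne, hB⟩),
      Finset.card_erase_of_mem hA]
    have h2le : 2 ≤ P.card := Finset.one_lt_card.mpr ⟨A, hA, B, hB, hne⟩
    omega

/-- Representative cluster label of a finite set. -/
noncomputable def clab {α : Type*} (C : α → ℕ) (S : Finset α) : ℕ :=
  if h : S.Nonempty then C h.choose else 0

lemma clab_eq {α : Type*} {C : α → ℕ} {S : Finset α}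
    (hpure : ∀ a ∈ S, ∀ b ∈ S, C a = C b) {a : α} (ha : a ∈ S) : clab C S = C a := by
  have hne : S.Nonempty := ⟨a, ha⟩
  rw [clab, dif_pos hne]
  exact hpure _ hne.choose_spec _ ha

open CTree in
lemma reach_inv {d : ℕ} (X : Finset (Euc d)) (C : Euc d → ℕ) (hsep : Separable X C)
    {P : Finset (Finset (Euc d))}
    (h : Relation.ReflTransGen (HACStep (singleLink))
      (X.image fun x => ({x} : Finset (Euc d))) P) :
    IsPartn X P ∧
      ((X.image C).card ≤ P.card → ∀ A ∈ P, ∀ a ∈ A, ∀ b ∈ A, C a = C b) := by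
  induction h with
  | refl =>
    refine ⟨⟨?_, ?_, ?_⟩, ?_⟩
    · intro A hA
      obtain ⟨x, hx, rfl⟩ := Finset.mem_image.mp hA
      exact ⟨Finset.singleton_nonempty x, Finset.singleton_subset_iff.mpr hx⟩
    · intro x hx
      exact ⟨{x}, Finset.mem_image_of_mem _ hx, Finset.mem_singleton_self x⟩
    · intro A hA B hB hAB
      obtain ⟨x, hx, rfl⟩ := Finset.mem_image.mp hA
      obtain ⟨y, hy, rfl⟩ := Finset.mem_image.mp hB
      exact Finset.disjoint_singleton.mpr (fun h => hAB (by rw [h]))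
    · intro _ A hA a ha b hb
      obtain ⟨x, hx, rfl⟩ := Finset.mem_image.mp hA
      rw [Finset.mem_singleton.mp ha, Finset.mem_singleton.mp hb]
  | @tail Q P' hreach hstep ih =>
    obtain ⟨hQpart, hQpure⟩ := ih
    cases hstep with
    | merge A B hA hB hne hmin =>
      obtain ⟨hpart, hcard⟩ := partn_step hQpart hA hB hne
      refine ⟨hpart, fun hK => ?_⟩
      have hKQ : (X.image C).card < Q.card := by omega
      have hQp := hQpure (le_of_lt hKQ)
      -- pigeonhole: two distinct sets in Q with the same cluster label
      obtain ⟨A', hA', B', hB', hne', hlab⟩ :=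
        Finset.exists_ne_map_eq_of_card_lt_of_maps_to (f := clab C) hKQ
          (fun S hS => by
            have hSne := (hQpart.1 S hS).1
            rw [clab_eq (C := C) (hQp S hS) hSne.choose_spec]
            exact Finset.mem_image_of_mem C ((hQpart.1 S hS).2 hSne.choose_spec))
      obtain ⟨a0, ha0, b0, hb0, heq0⟩ :=
        singleLink_mem' (hQpart.1 A' hA').1 (hQpart.1 B' hB').1
      have ha0X : a0 ∈ X := (hQpart.1 A' hA').2 ha0
      have hb0X : b0 ∈ X := (hQpart.1 B' hB').2 hb0
      have hC0 : C a0 = C b0 := by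
        rw [← clab_eq (hQp A' hA') ha0, ← clab_eq (hQp B' hB') hb0, hlab]
      have hne0 : a0 ≠ b0 := fun h =>
        Finset.disjoint_left.mp (hQpart.2.2 A' hA' B' hB' hne') ha0 (h ▸ hb0)
      obtain ⟨a1, ha1, b1, hb1, heq1⟩ :=
        singleLink_mem' (hQpart.1 A hA).1 (hQpart.1 B hB).1
      have hC1 : C a1 = C b1 := by
        by_contra hcc
        have hlt := hsep a0 ha0X b0 hb0X a1 ((hQpart.1 A hA).2 ha1)
          b1 ((hQpart.1 B hB).2 hb1) hne0 hC0 hcc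
        have hle := hmin A' hA' B' hB' hne'
        rw [heq0, heq1] at hle
        linarith
      letI : DecidableEq (Euc d) := fun a b => Classical.propDecidable (a = b)
      -- the merged set is pure
      have hmerged : ∀ u ∈ A ∪ B, C u = C a1 := by
        intro u hu
        rcases Finset.mem_union.mp hu with hu | hu
        · exact hQp A hA u hu a1 ha1
        · exact (hQp B hB u hu b1 hb1).trans hC1.symm
      intro S hS a ha b hb
      rcases Finset.mem_insert.mp hS with rfl | hS
      · rw [hmerged a ha, hmerged b hb]
      · exact hQp S (Finset.mem_of_mem_erase (Finset.mem_of_mem_erase hS)) a ha b hb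

open CTree in
/-- under separability, hierarchical agglomerative clustering with
single linkage only merges subsets lying in a common ground-truth cluster while more
than `K` subsets remain, so every reachable partition with at least `K` subsets is
cluster-pure, and the reachable partition with exactly `K` subsets is exactly the
ground-truth clustering. -/
theorem single_linkage_recovers_ground_truth {d : ℕ} (X : Finset (Euc d))
    (C : Euc d → ℕ) (hsep : Separable X C) :
    (∀ P, Relation.ReflTransGen (HACStep (singleLink))
        (X.image fun x => ({x} : Finset (Euc d))) P →
      (X.image C).card ≤ P.card → ∀ A ∈ P, ∀ a ∈ A, ∀ b ∈ A, C a = C b) ∧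
    (∀ P, Relation.ReflTransGen (HACStep (singleLink))
        (X.image fun x => ({x} : Finset (Euc d))) P →
      P.card = (X.image C).card →
      P = X.image fun x => X.filter fun y => C y = C x) := by
  constructor
  · intro P h hK
    exact (reach_inv X C hsep h).2 hK
  · intro P h hcard
    obtain ⟨hpart, hpure⟩ := reach_inv X C hsep h
    have hpureK := hpure (le_of_eq hcard.symm)
    have hg : ∀ S ∈ P, ∀ a ∈ S, clab C S = C a := fun S hS a ha =>
      clab_eq (hpureK S hS) ha
    have himg : P.image (clab C) = X.image C := by
      apply Finset.Subset.antisymm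
      · intro c hc
        obtain ⟨S, hS, rfl⟩ := Finset.mem_image.mp hc
        have hSne := (hpart.1 S hS).1
        rw [hg S hS _ hSne.choose_spec]
        exact Finset.mem_image_of_mem C ((hpart.1 S hS).2 hSne.choose_spec)
      · intro c hc
        obtain ⟨x, hx, rfl⟩ := Finset.mem_image.mp hc
        obtain ⟨S, hS, hxS⟩ := hpart.2.1 x hx
        exact Finset.mem_image.mpr ⟨S, hS, hg S hS x hxS⟩
    have hinj : Set.InjOn (clab C) ↑P :=
      Finset.card_image_iff.mp (by rw [himg, hcard])
    have hclus : ∀ A ∈ P, ∀ a ∈ A, A = X.filter fun y => C y = C a := by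
      intro A hAP a ha
      ext y
      simp only [Finset.mem_filter]
      constructor
      · intro hy
        exact ⟨(hpart.1 A hAP).2 hy, hpureK A hAP y hy a ha⟩
      · rintro ⟨hyX, hCy⟩
        obtain ⟨B, hBP, hyB⟩ := hpart.2.1 y hyX
        have : B = A := hinj hBP hAP (by rw [hg B hBP y hyB, hg A hAP a ha, hCy])
        exact this ▸ hyB
    ext S
    constructor
    · intro hS
      obtain ⟨a, ha⟩ := (hpart.1 S hS).1
      exact Finset.mem_image.mpr ⟨a, (hpart.1 S hS).2 ha, (hclus S hS a ha).symm⟩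
    · intro hS
      obtain ⟨x, hx, rfl⟩ := Finset.mem_image.mp hS
      obtain ⟨A, hAP, hxA⟩ := hpart.2.1 x hx
      exact hclus A hAP x hxA ▸ hAP
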